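/- Level-set growth for VC classes under 0–1 loss: Let n ≥ 3, let d ≥ 1, and let ℋ be a finite class of functions from {x_1,…,x_n} to {0,1} whose VC dimension is at most d (no subset of {x_1,…,x_n} of cardinality d+1 is shattered by ℋ). Let μ be the counting measure on ℋ, and let 𝒯 = {1, 2, …, N} with N = ⌈24 d ln n⌉. Then the number of tolerances t ∈ 𝒯 for which μ(ℋ_{t+1}) > 2·μ(ℋ_{t−1}) is at most 6 d ln n; consequently, at least (3/4)·|𝒯| tolerances t ∈ 𝒯 satisfy both μ(ℋ_{t+1}) ≤ 2·μ(ℋ_{t−1}) and ℋ_{t−1} ⊆ ℋ_{t,i} ⊆ ℋ_{t+1} for all i ∈ {1,…,n}. -/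

import Mathlib

open Finset
open scoped Classical

/-- **Level-set growth for VC classes under 0–1 loss.**
`H` is a finite class of binary hypotheses on the `n` sample points (identified with
`Fin n`), of VC dimension at most `d` (no subset of cardinality `d+1` is shattered).
With the counting measure (`Finset.card`), grid `𝒯 = {1,…,N}`, `N = ⌈24 d ln n⌉`:
the number of bad tolerances (those with `|ℋ_{t+1}| > 2|ℋ_{t−1}|`) is at most
`6 d ln n`, and consequently at least `(3/4)·|𝒯|` tolerances satisfy both the growth
bound and the sandwich `ℋ_{t−1} ⊆ ℋ_{t,i} ⊆ ℋ_{t+1}` for all `i`. -/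

private lemma chain_pow_le (F : ℝ → ℕ)
    (hmono : ∀ a b : ℝ, a ≤ b → F a ≤ F b) (hpos : 1 ≤ F 0) :
    ∀ k : ℕ, ∀ S : Finset ℕ, S.card = k → ∀ hS : S.Nonempty,
      (∀ t ∈ S, 1 ≤ t ∧ 2 * (F ((t : ℝ) - 1) : ℝ) < (F ((t : ℝ) + 1) : ℝ)) →
      (∀ a ∈ S, ∀ b ∈ S, a < b → a + 2 ≤ b) →
      2 ^ k ≤ F ((S.max' hS : ℝ) + 1) := by
  intro k
  induction k using Nat.strong_induction_on with
  | _ k ih =>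
    intro S hcard hS hbad hgap
    set s := S.max' hS with hsdef
    have hsS : s ∈ S := S.max'_mem hS
    have hs1 : 1 ≤ s := (hbad s hsS).1
    have hFs1 : 1 ≤ F ((s : ℝ) - 1) := by
      refine le_trans hpos (hmono 0 _ ?_)
      have : (1 : ℝ) ≤ (s : ℝ) := by exact_mod_cast hs1
      linarith
    have hdbl : 2 * F ((s : ℝ) - 1) < F ((s : ℝ) + 1) := by
      exact_mod_cast (hbad s hsS).2
    rcases Finset.eq_empty_or_nonempty (S.erase s) with he | hne
    · have hSs : S = {s} := by
        apply Finset.eq_singleton_iff_unique_mem.2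
        refine ⟨hsS, fun b hb => ?_⟩
        by_contra hbs
        have : b ∈ S.erase s := Finset.mem_erase.2 ⟨hbs, hb⟩
        simp [he] at this
      have hk1 : k = 1 := by rw [← hcard, hSs]; simp
      subst hk1
      omega
    · set S' := S.erase s with hS'def
      have hS'sub : S' ⊆ S := Finset.erase_subset _ _
      have hcard' : S'.card = k - 1 := by rw [hS'def, Finset.card_erase_of_mem hsS, hcard]
      have hk1 : 1 ≤ k := by rw [← hcard]; exact Finset.card_pos.2 hS
      have hklt : k - 1 < k := by omega
      set s' := S'.max' hne with hs'def
      have hs'S : s' ∈ S := hS'sub (S'.max'_mem hne)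
      have hs'ne : s' ≠ s := (Finset.mem_erase.1 (S'.max'_mem hne)).1
      have hs'lt : s' < s := lt_of_le_of_ne (S.le_max' _ hs'S) hs'ne
      have hgap' : s' + 2 ≤ s := hgap s' hs'S s hsS hs'lt
      have hIH : 2 ^ (k - 1) ≤ F ((s' : ℝ) + 1) :=
        ih (k - 1) hklt S' hcard' hne
          (fun t ht => hbad t (hS'sub ht))
          (fun a ha b hb hab => hgap a (hS'sub ha) b (hS'sub hb) hab)
      have hmono' : F ((s' : ℝ) + 1) ≤ F ((s : ℝ) - 1) := by
        apply hmono
        have : (s' : ℝ) + 2 ≤ (s : ℝ) := by exact_mod_cast hgap'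
        linarith
      calc 2 ^ k = 2 * 2 ^ (k - 1) := by
            rw [← pow_succ']; congr 1; omega
        _ ≤ 2 * F ((s' : ℝ) + 1) := by omega
        _ ≤ 2 * F ((s : ℝ) - 1) := by omega
        _ ≤ F ((s : ℝ) + 1) := by omega

private lemma card_le_pow_of_vc {n d : ℕ} (hn : 3 ≤ n) (hd : 1 ≤ d)
    (H : Finset (Fin n → Bool))
    (hVC : ∀ T : Finset (Fin n), T.card = d + 1 →
      ¬ (∀ f : Fin n → Bool, ∃ h ∈ H, ∀ i ∈ T, h i = f i)) :
    H.card ≤ n ^ (2 * d) := by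
  classical
  set toSet : (Fin n → Bool) → Finset (Fin n) :=
    fun h => Finset.univ.filter fun i => h i = true with htoSet
  have hmemtoSet : ∀ h i, i ∈ toSet h ↔ h i = true := by
    intro h i; simp [htoSet]
  have hinj : Set.InjOn toSet H := by
    intro h _ h' _ hE
    funext i
    have := (hmemtoSet h i).symm.trans (hE ▸ hmemtoSet h' i)
    cases hb : h i <;> cases hb' : h' i <;> simp_all
  set 𝒜 := H.image toSet with h𝒜
  have hcard : H.card = 𝒜.card := (Finset.card_image_of_injOn hinj).symm
  have hsh : ∀ s ∈ 𝒜.shatterer, s.card ≤ d := by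
    intro s hs
    by_contra hlt
    push_neg at hlt
    obtain ⟨T, hTs, hTcard⟩ := Finset.exists_subset_card_eq (show d + 1 ≤ s.card from hlt)
    have hTsh : 𝒜.Shatters T := (Finset.mem_shatterer.1 hs).mono_right hTs
    refine hVC T hTcard fun f => ?_
    obtain ⟨u, hu, huT⟩ := hTsh (Finset.filter_subset (fun i => f i = true) T)
    obtain ⟨h, hhH, rfl⟩ := Finset.mem_image.1 hu
    refine ⟨h, hhH, fun i hi => ?_⟩
    have h1 : i ∈ T ∩ toSet h ↔ i ∈ T.filter fun j => f j = true := by rw [huT]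
    simp only [Finset.mem_inter, Finset.mem_filter, hmemtoSet, hi, true_and] at h1
    cases hb : h i <;> cases hb' : f i <;> simp_all
  have h1 : 𝒜.shatterer ⊆ (Finset.range (d + 1)).biUnion
      fun i => Finset.powersetCard i (Finset.univ : Finset (Fin n)) := by
    intro s hs
    simp only [Finset.mem_biUnion, Finset.mem_range, Finset.mem_powersetCard]
    exact ⟨s.card, Nat.lt_succ_of_le (hsh s hs), Finset.subset_univ s, rfl⟩
  calc H.card = 𝒜.card := hcard
    _ ≤ 𝒜.shatterer.card := Finset.card_le_card_shatterer _
    _ ≤ ((Finset.range (d + 1)).biUnion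
        fun i => Finset.powersetCard i (Finset.univ : Finset (Fin n))).card :=
          Finset.card_le_card h1
    _ ≤ ∑ i ∈ Finset.range (d + 1),
        (Finset.powersetCard i (Finset.univ : Finset (Fin n))).card :=
          Finset.card_biUnion_le
    _ ≤ ∑ _i ∈ Finset.range (d + 1), n ^ d := by
        refine Finset.sum_le_sum fun i hi => ?_
        rw [Finset.card_powersetCard, Finset.card_univ, Fintype.card_fin]
        exact le_trans (Nat.choose_le_pow n i)
          (Nat.pow_le_pow_right (by omega) (Nat.lt_succ_iff.1 (Finset.mem_range.1 hi)))
    _ = (d + 1) * n ^ d := by rw [Finset.sum_const, Finset.card_range, smul_eq_mul]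
    _ ≤ n ^ d * n ^ d := by
        refine Nat.mul_le_mul_right _ ?_
        calc d + 1 ≤ 2 ^ d := Nat.succ_le_of_lt (Nat.lt_two_pow_self (n := d))
          _ ≤ n ^ d := Nat.pow_le_pow_left (by omega) d
    _ = n ^ (2 * d) := by rw [← pow_add]; ring_nf


theorem vc_levelset_growth
    {n d : ℕ} (hn : 3 ≤ n) (hd : 1 ≤ d)
    (y : Fin n → Bool)
    (H : Finset (Fin n → Bool)) (hHne : H.Nonempty)
    -- VC dimension at most d: no subset of cardinality d+1 is shattered by H
    (hVC : ∀ T : Finset (Fin n), T.card = d + 1 →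
      ¬ (∀ f : Fin n → Bool, ∃ h ∈ H, ∀ i ∈ T, h i = f i))
    (ℓ : Bool → Bool → ℝ) (hℓ : ∀ a b, ℓ a b = if a = b then 0 else 1)
    (LS : (Fin n → Bool) → ℝ) (hLS : ∀ h, LS h = ∑ i, ℓ (h i) (y i))
    (LSm : Fin n → (Fin n → Bool) → ℝ)
    (hLSm : ∀ i h, LSm i h = ∑ j ∈ Finset.univ.erase i, ℓ (h j) (y j))
    (g : Fin n → Bool) (hgH : g ∈ H) (hg : ∀ h ∈ H, LS g ≤ LS h)
    (gm : Fin n → Fin n → Bool) (hgmH : ∀ i, gm i ∈ H)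
    (hgm : ∀ i, ∀ h ∈ H, LSm i (gm i) ≤ LSm i h)
    (Ht : ℝ → Finset (Fin n → Bool))
    (hHt : ∀ s, Ht s = H.filter fun h => LS h ≤ LS g + s)
    (Hti : ℝ → Fin n → Finset (Fin n → Bool))
    (hHti : ∀ s i, Hti s i = H.filter fun h => LSm i h ≤ LSm i (gm i) + s)
    (N : ℕ) (hN : N = ⌈24 * (d : ℝ) * Real.log n⌉₊) :
    ((((Finset.Icc 1 N).filter fun t : ℕ =>
        2 * ((Ht ((t : ℝ) - 1)).card : ℝ) < ((Ht ((t : ℝ) + 1)).card : ℝ)).card : ℝ)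
      ≤ 6 * (d : ℝ) * Real.log n) ∧
    ((3 / 4 : ℝ) * N ≤
      (((Finset.Icc 1 N).filter fun t : ℕ =>
        ((Ht ((t : ℝ) + 1)).card : ℝ) ≤ 2 * ((Ht ((t : ℝ) - 1)).card : ℝ) ∧
        ∀ i : Fin n, Ht ((t : ℝ) - 1) ⊆ Hti (t : ℝ) i ∧
          Hti (t : ℝ) i ⊆ Ht ((t : ℝ) + 1)).card : ℝ)) := by
  classical
  have hl0 : ∀ a b, 0 ≤ ℓ a b := by
    intro a b; rw [hℓ]; split <;> norm_num
  have hl1 : ∀ a b, ℓ a b ≤ 1 := by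
    intro a b; rw [hℓ]; split <;> norm_num
  have hsplit : ∀ (i : Fin n) (h : Fin n → Bool), LS h = LSm i h + ℓ (h i) (y i) := by
    intro i h
    rw [hLS h, hLSm i h, Finset.sum_erase_add _ _ (Finset.mem_univ i)]
  have hLSm_le : ∀ (i : Fin n) (h : Fin n → Bool), LSm i h ≤ LS h := by
    intro i h; have := hl0 (h i) (y i); rw [hsplit i h]; linarith
  have hLS_le : ∀ (i : Fin n) (h : Fin n → Bool), LS h ≤ LSm i h + 1 := by
    intro i h; have := hl1 (h i) (y i); rw [hsplit i h]; linarith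
  -- the sandwich holds for every real tolerance
  have hsand : ∀ (t : ℝ) (i : Fin n), Ht (t - 1) ⊆ Hti t i ∧ Hti t i ⊆ Ht (t + 1) := by
    intro t i
    constructor
    · intro h hh
      rw [hHt] at hh; rw [hHti]
      rw [Finset.mem_filter] at hh ⊢
      refine ⟨hh.1, ?_⟩
      have h1 := hLSm_le i h
      have h2 := hLS_le i (gm i)
      have h3 := hg (gm i) (hgmH i)
      linarith [hh.2]
    · intro h hh
      rw [hHti] at hh; rw [hHt]
      rw [Finset.mem_filter] at hh ⊢
      refine ⟨hh.1, ?_⟩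
      have h1 := hLS_le i h
      have h2 := hLSm_le i g
      have h3 := hgm i g hgH
      linarith [hh.2]
  -- monotonicity and positivity of the level-set counting function
  have hmono : ∀ a b : ℝ, a ≤ b → (Ht a).card ≤ (Ht b).card := by
    intro a b hab
    apply Finset.card_le_card
    rw [hHt, hHt]
    intro h hh
    rw [Finset.mem_filter] at hh ⊢
    exact ⟨hh.1, by linarith [hh.2]⟩
  have hpos : 1 ≤ (Ht 0).card := by
    refine Finset.card_pos.2 ⟨g, ?_⟩
    rw [hHt, Finset.mem_filter]
    exact ⟨hgH, by linarith⟩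
  have hHtsub : ∀ s : ℝ, Ht s ⊆ H := by
    intro s; rw [hHt]; exact Finset.filter_subset _ _
  have hHcard : H.card ≤ n ^ (2 * d) := card_le_pow_of_vc hn hd H hVC
  set B := (Finset.Icc 1 N).filter fun t : ℕ =>
      2 * ((Ht ((t : ℝ) - 1)).card : ℝ) < ((Ht ((t : ℝ) + 1)).card : ℝ) with hB
  have key : ∀ S : Finset ℕ, S ⊆ B → (∀ a ∈ S, ∀ b ∈ S, a < b → a + 2 ≤ b) →
      2 ^ S.card ≤ n ^ (2 * d) := by
    intro S hSB hgap
    rcases S.eq_empty_or_nonempty with rfl | hS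
    · simpa using Nat.one_le_pow _ _ (by omega)
    · have hchain := chain_pow_le (fun r => (Ht r).card) hmono hpos S.card S rfl hS
        (fun t ht => by
          have := hSB ht
          rw [hB, Finset.mem_filter, Finset.mem_Icc] at this
          exact ⟨this.1.1, this.2⟩) hgap
      exact le_trans hchain (le_trans (Finset.card_le_card (hHtsub _)) hHcard)
  set B₀ := B.filter (fun t => Even t) with hB₀
  set B₁ := B.filter (fun t => ¬ Even t) with hB₁
  have hBcard : B₀.card + B₁.card = B.card :=
    Finset.card_filter_add_card_filter_not (fun t => Even t)
  have hgap01 : ∀ S : Finset ℕ, (∀ a ∈ S, ∀ b ∈ S, (Even a ↔ Even b)) →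
      ∀ a ∈ S, ∀ b ∈ S, a < b → a + 2 ≤ b := by
    intro S hpar a ha b hb hab
    have hE : Even (b - a) := (Nat.even_sub hab.le).2 (hpar b hb a ha)
    obtain ⟨r, hr⟩ := hE
    omega
  have hpar0 : ∀ a ∈ B₀, ∀ b ∈ B₀, (Even a ↔ Even b) := by
    intro a ha b hb
    rw [hB₀, Finset.mem_filter] at ha hb
    tauto
  have hpar1 : ∀ a ∈ B₁, ∀ b ∈ B₁, (Even a ↔ Even b) := by
    intro a ha b hb
    rw [hB₁, Finset.mem_filter] at ha hb
    tauto
  have hk0 : 2 ^ B₀.card ≤ n ^ (2 * d) :=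
    key B₀ (Finset.filter_subset _ _) (hgap01 B₀ hpar0)
  have hk1 : 2 ^ B₁.card ≤ n ^ (2 * d) :=
    key B₁ (Finset.filter_subset _ _) (hgap01 B₁ hpar1)
  have hlogn : 0 < Real.log n :=
    Real.log_pos (by exact_mod_cast (by omega : 1 < n))
  have hlogbound : ∀ m : ℕ, 2 ^ m ≤ n ^ (2 * d) → (m : ℝ) * Real.log 2 ≤ 2 * d * Real.log n := by
    intro m hm
    have h2 : (2 : ℝ) ^ m ≤ (n : ℝ) ^ (2 * d) := by exact_mod_cast hm
    have h3 := Real.log_le_log (by positivity) h2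
    rw [Real.log_pow, Real.log_pow] at h3
    push_cast at h3 ⊢
    linarith
  have hlog2 : (0.6931471803 : ℝ) < Real.log 2 := Real.log_two_gt_d9
  have hd1 : (1 : ℝ) ≤ (d : ℝ) := by exact_mod_cast hd
  have hBbound : (B.card : ℝ) ≤ 6 * (d : ℝ) * Real.log n := by
    have h0 := hlogbound _ hk0
    have h1 := hlogbound _ hk1
    have hsum : (B.card : ℝ) = (B₀.card : ℝ) + (B₁.card : ℝ) := by
      rw [← hBcard]; push_cast; ring
    rw [hsum]
    have hknn : (0 : ℝ) ≤ (B₀.card : ℝ) + (B₁.card : ℝ) :=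
      add_nonneg (Nat.cast_nonneg _) (Nat.cast_nonneg _)
    have hsumlog : ((B₀.card : ℝ) + (B₁.card : ℝ)) * Real.log 2
        ≤ 4 * d * Real.log n := by rw [add_mul]; linarith
    have h23 : ((B₀.card : ℝ) + (B₁.card : ℝ)) * (2 / 3 : ℝ)
        ≤ ((B₀.card : ℝ) + (B₁.card : ℝ)) * Real.log 2 :=
      mul_le_mul_of_nonneg_left (by linarith) hknn
    have hdL : (0 : ℝ) < (d : ℝ) * Real.log n := mul_pos (by linarith) hlogn
    linarith
  refine ⟨hBbound, ?_⟩
  -- second part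
  have hgoodeq : ((Finset.Icc 1 N).filter fun t : ℕ =>
        ((Ht ((t : ℝ) + 1)).card : ℝ) ≤ 2 * ((Ht ((t : ℝ) - 1)).card : ℝ) ∧
        ∀ i : Fin n, Ht ((t : ℝ) - 1) ⊆ Hti (t : ℝ) i ∧
          Hti (t : ℝ) i ⊆ Ht ((t : ℝ) + 1))
      = (Finset.Icc 1 N).filter fun t : ℕ =>
        ¬ (2 * ((Ht ((t : ℝ) - 1)).card : ℝ) < ((Ht ((t : ℝ) + 1)).card : ℝ)) := by
    apply Finset.filter_congr
    intro t _
    simp only [not_lt]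
    exact ⟨fun h => h.1, fun h => ⟨h, fun i => hsand (t : ℝ) i⟩⟩
  rw [hgoodeq]
  have hcount : B.card + ((Finset.Icc 1 N).filter fun t : ℕ =>
      ¬ (2 * ((Ht ((t : ℝ) - 1)).card : ℝ) < ((Ht ((t : ℝ) + 1)).card : ℝ))).card
      = (Finset.Icc 1 N).card := by
    rw [hB]
    exact Finset.card_filter_add_card_filter_not _
  have hIccN : (Finset.Icc 1 N).card = N := by rw [Nat.card_Icc]; omega
  rw [hIccN] at hcount
  have hNle : 24 * (d : ℝ) * Real.log n ≤ N := by rw [hN]; exact Nat.le_ceil _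
  have hcount' : (B.card : ℝ) + (((Finset.Icc 1 N).filter fun t : ℕ =>
      ¬ (2 * ((Ht ((t : ℝ) - 1)).card : ℝ) < ((Ht ((t : ℝ) + 1)).card : ℝ))).card : ℝ)
      = (N : ℝ) := by exact_mod_cast congrArg (Nat.cast : ℕ → ℝ) hcount
  linarith
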